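/- arXiv:0912.0285 — 5 statements merged into one kernel-verified Lean document; each statement's English description precedes it below -/
import Mathlib

section
/- Let N ≥ 1, γ > 0 and β₁, …, β_N > 0 with γ > ∑_{j=1}^N 1/β_j. Then the integral over {λ ∈ R^N : |λ| > 1} of (∑_{j=1}^N |λ_j|^{β_j})^{-γ} dλ is finite. -/
open MeasureTheory

private lemma aux_pow (β x : ℝ) (hβ : 0 < β) (hx : 0 ≤ x) :
    (1 + x) ^ β ≤ 2 ^ β * (1 + x ^ β) := by
  rcases le_total x 1 with hx1 | hx1
  · calc (1 + x) ^ β ≤ 2 ^ β :=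
          Real.rpow_le_rpow (by linarith) (by linarith) hβ.le
      _ ≤ 2 ^ β * (1 + x ^ β) := by
          nlinarith [Real.rpow_nonneg hx β, Real.rpow_pos_of_pos (two_pos (α := ℝ)) β]
  · calc (1 + x) ^ β ≤ (2 * x) ^ β :=
          Real.rpow_le_rpow (by linarith) (by linarith) hβ.le
      _ = 2 ^ β * x ^ β := Real.mul_rpow zero_le_two hx
      _ ≤ 2 ^ β * (1 + x ^ β) := by
          nlinarith [Real.rpow_nonneg hx β, Real.rpow_pos_of_pos (two_pos (α := ℝ)) β]

set_option maxHeartbeats 1000000 in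
theorem stmt3 (N : ℕ) (hN : 1 ≤ N) (γ : ℝ) (hγ : 0 < γ) (β : Fin N → ℝ)
    (hβ : ∀ j, 0 < β j) (h : ∑ j, 1 / β j < γ) :
    ∫⁻ l in {l : EuclideanSpace ℝ (Fin N) | 1 < ‖l‖},
      ENNReal.ofReal ((∑ j, |l j| ^ β j) ^ (-γ)) < ⊤ := by
  have hN0 : (0:ℝ) < N := by exact_mod_cast hN
  haveI : Nonempty (Fin N) := Fin.pos_iff_nonempty.mp hN
  set ε : ℝ := (γ - ∑ j, 1 / β j) / N with hεdef
  have hε : 0 < ε := div_pos (by linarith) hN0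
  set q : Fin N → ℝ := fun j => 1 / β j + ε with hqdef
  have hq : ∀ j, 0 < q j := fun j => add_pos (one_div_pos.mpr (hβ j)) hε
  have hqsum : ∑ j, q j = γ := by
    rw [hqdef]
    rw [Finset.sum_add_distrib, Finset.sum_const, Finset.card_univ, Fintype.card_fin,
      nsmul_eq_mul, hεdef]
    field_simp
    ring
  set r : Fin N → ℝ := fun j => β j * q j with hrdef
  have hr : ∀ j, 1 < r j := by
    intro j
    have h1 : β j * (1 / β j) = 1 := by
      rw [mul_one_div, div_self (hβ j).ne']
    have h2 := hβ j
    simp only [hrdef, hqdef]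
    nlinarith
  set m : ℝ := (Real.sqrt N)⁻¹ with hmdef
  have hsN : 0 < Real.sqrt N := Real.sqrt_pos.mpr hN0
  have hm0 : 0 < m := by positivity
  have hm1 : m ≤ 1 := by
    rw [hmdef, inv_le_one_iff₀]
    right
    rw [show (1:ℝ) = Real.sqrt 1 by simp]
    exact Real.sqrt_le_sqrt (by exact_mod_cast hN)
  obtain ⟨i₀, -, hi₀⟩ := Finset.exists_mem_eq_inf' (Finset.univ_nonempty (α := Fin N))
    (fun i => m ^ β i)
  set c : ℝ := Finset.univ.inf' Finset.univ_nonempty (fun i => m ^ β i) with hcdef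
  have hc0 : 0 < c := by rw [hi₀]; exact Real.rpow_pos_of_pos hm0 _
  have hc1 : c ≤ 1 := by
    rw [hi₀]
    exact Real.rpow_le_one hm0.le hm1 (hβ i₀).le
  have hcle : ∀ i, c ≤ m ^ β i := fun i => Finset.inf'_le _ (Finset.mem_univ i)
  set b : Fin N → ℝ := fun j => c / (2 * 2 ^ β j) with hbdef
  have hb : ∀ j, 0 < b j := by
    intro j
    have : (0:ℝ) < 2 ^ β j := Real.rpow_pos_of_pos two_pos _
    rw [hbdef]
    positivity
  set C : ℝ := ∏ j, (b j) ^ (-(q j)) with hCdef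
  set g : Fin N → ℝ → ℝ := fun j t => (1 + |t|) ^ (-(r j)) with hgdef
  have hgint : ∀ j, Integrable (g j) := by
    intro j
    have := integrable_one_add_norm (E := ℝ) (μ := volume) (r := r j) (by simpa using hr j)
    simpa [hgdef, Real.norm_eq_abs] using this
  have hprod : Integrable (fun x : Fin N → ℝ => C * ∏ j, g j (x j)) :=
    (Integrable.fintype_prod (f := g) hgint).const_mul C
  have hmp := EuclideanSpace.volume_preserving_symm_measurableEquiv_toLp (Fin N)
  have hint : Integrable (fun l : EuclideanSpace ℝ (Fin N) => C * ∏ j, g j (l j)) := by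
    have h2 := (hmp.integrable_comp_emb (MeasurableEquiv.measurableEmbedding _)).2 hprod
    exact h2
  have key : ∀ l : EuclideanSpace ℝ (Fin N), 1 < ‖l‖ →
      (∑ j, |l j| ^ β j) ^ (-γ) ≤ C * ∏ j, g j (l j) := by
    intro l hl
    set s := ∑ j, |l j| ^ β j with hsdef
    have hterm : ∀ j, 0 ≤ |l j| ^ β j := fun j => Real.rpow_nonneg (abs_nonneg _) _
    obtain ⟨j₀, hj₀⟩ : ∃ j, m ≤ |l j| := by
      by_contra hcon
      push_neg at hcon
      have hsq : ‖l‖ ^ 2 < 1 := by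
        rw [EuclideanSpace.norm_eq, Real.sq_sqrt (Finset.sum_nonneg fun i _ => sq_nonneg _)]
        simp only [Real.norm_eq_abs, sq_abs]
        calc ∑ i, l i ^ 2 < ∑ _i : Fin N, m ^ 2 := by
              apply Finset.sum_lt_sum_of_nonempty Finset.univ_nonempty
              intro i _
              have h1 := hcon i
              nlinarith [abs_nonneg (l i), sq_abs (l i)]
          _ = N * m ^ 2 := by
              rw [Finset.sum_const, Finset.card_univ, Fintype.card_fin, nsmul_eq_mul]
          _ = 1 := by
              rw [hmdef, inv_pow, Real.sq_sqrt hN0.le]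
              field_simp
      nlinarith
    have hsingle : ∀ j, |l j| ^ β j ≤ s :=
      fun j => Finset.single_le_sum (fun i _ => hterm i) (Finset.mem_univ j)
    have hsc : c ≤ s :=
      calc c ≤ m ^ β j₀ := hcle j₀
        _ ≤ |l j₀| ^ β j₀ := Real.rpow_le_rpow hm0.le hj₀ (hβ j₀).le
        _ ≤ s := hsingle j₀
    have hs0 : 0 < s := lt_of_lt_of_le hc0 hsc
    have hkey : ∀ j, b j * (1 + |l j|) ^ β j ≤ s := by
      intro j
      have h1 : (1 + |l j|) ^ β j ≤ 2 ^ β j * (1 + |l j| ^ β j) :=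
        aux_pow _ _ (hβ j) (abs_nonneg _)
      have h3 : (0:ℝ) < 2 ^ β j := Real.rpow_pos_of_pos two_pos _
      have h4 := hsingle j
      have h5 := hterm j
      calc b j * (1 + |l j|) ^ β j
          ≤ c / (2 * 2 ^ β j) * (2 ^ β j * (1 + |l j| ^ β j)) := by
            apply mul_le_mul_of_nonneg_left h1 (by positivity)
        _ = c / 2 * (1 + |l j| ^ β j) := by field_simp
        _ ≤ s := by nlinarith
    have hγprod : s ^ γ = ∏ j, s ^ q j := by
      rw [← hqsum, Real.rpow_sum_of_pos hs0]
    have hge : ∀ j, (b j) ^ (q j) * (1 + |l j|) ^ (r j) ≤ s ^ q j := by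
      intro j
      have h0 : 0 ≤ (1 + |l j|) ^ β j := Real.rpow_nonneg (by positivity) _
      have heq : (b j) ^ (q j) * (1 + |l j|) ^ (r j)
          = (b j * (1 + |l j|) ^ β j) ^ (q j) := by
        rw [Real.mul_rpow (hb j).le h0, ← Real.rpow_mul (by positivity)]
      rw [heq]
      exact Real.rpow_le_rpow (by positivity) (hkey j) (hq j).le
    have hprodge : (∏ j, (b j) ^ q j) * ∏ j, (1 + |l j|) ^ (r j) ≤ s ^ γ := by
      rw [hγprod, ← Finset.prod_mul_distrib]
      exact Finset.prod_le_prod (fun j _ => by positivity) (fun j _ => hge j)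
    have hL0 : 0 < (∏ j, (b j) ^ q j) * ∏ j, (1 + |l j|) ^ (r j) := by
      apply mul_pos <;> exact Finset.prod_pos (fun j _ => Real.rpow_pos_of_pos (by positivity) _)
    rw [Real.rpow_neg hs0.le]
    have hinv : (s ^ γ)⁻¹ ≤ ((∏ j, (b j) ^ q j) * ∏ j, (1 + |l j|) ^ (r j))⁻¹ := by
      apply inv_anti₀ hL0 hprodge
    refine hinv.trans_eq ?_
    rw [mul_inv, ← Finset.prod_inv_distrib, ← Finset.prod_inv_distrib]
    congr 1
    · rw [hCdef]
      exact Finset.prod_congr rfl fun j _ => (Real.rpow_neg (hb j).le _).symm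
    · refine Finset.prod_congr rfl fun j _ => ?_
      show ((1 + |l j|) ^ r j)⁻¹ = (1 + |l j|) ^ (-r j)
      exact (Real.rpow_neg (by positivity) _).symm
  have hcont : Continuous (fun l : EuclideanSpace ℝ (Fin N) => C * ∏ j, g j (l j)) := by
    apply continuous_const.mul
    apply continuous_finset_prod
    intro j _
    have h1 : Continuous fun l : EuclideanSpace ℝ (Fin N) => 1 + |l j| :=
      continuous_const.add (EuclideanSpace.proj (𝕜 := ℝ) j).continuous.abs
    exact h1.rpow_const (fun x => Or.inl (by positivity))
  have hmeas : Measurable (fun l : EuclideanSpace ℝ (Fin N) =>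
      ENNReal.ofReal (C * ∏ j, g j (l j))) :=
    ENNReal.measurable_ofReal.comp hcont.measurable
  have step1 : ∫⁻ l in {l : EuclideanSpace ℝ (Fin N) | 1 < ‖l‖},
        ENNReal.ofReal ((∑ j, |l j| ^ β j) ^ (-γ))
      ≤ ∫⁻ l in {l : EuclideanSpace ℝ (Fin N) | 1 < ‖l‖},
        ENNReal.ofReal (C * ∏ j, g j (l j)) :=
    setLIntegral_mono hmeas (fun l hl => ENNReal.ofReal_le_ofReal (key l hl))
  have step2 : ∫⁻ l in {l : EuclideanSpace ℝ (Fin N) | 1 < ‖l‖},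
        ENNReal.ofReal (C * ∏ j, g j (l j))
      ≤ ∫⁻ l : EuclideanSpace ℝ (Fin N), ENNReal.ofReal (C * ∏ j, g j (l j)) :=
    setLIntegral_le_lintegral _ _
  have step3 := hint.lintegral_lt_top
  exact lt_of_le_of_lt (le_trans step1 step2) step3
end

section
/- Let N ≥ 1, γ > 0 and β₁, …, β_N > 0 with γ ≤ ∑_{j=1}^N 1/β_j. Then the integral over {λ ∈ R^N : |λ| > 1} of (∑_{j=1}^N |λ_j|^{β_j})^{-γ} dλ is infinite. -/
open MeasureTheory

theorem stmt4 (N : ℕ) (hN : 1 ≤ N) (γ : ℝ) (hγ : 0 < γ) (β : Fin N → ℝ)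
    (hβ : ∀ j, 0 < β j) (h : γ ≤ ∑ j, 1 / β j) :
    ∫⁻ l in {l : EuclideanSpace ℝ (Fin N) | 1 < ‖l‖},
      ENNReal.ofReal ((∑ j, |l j| ^ β j) ^ (-γ)) = ⊤ := by
  classical
  haveI : NeZero N := ⟨by omega⟩
  set e := (MeasurableEquiv.toLp 2 (Fin N → ℝ)).symm with he
  have hvp : MeasurePreserving e.symm volume volume :=
    (EuclideanSpace.volume_preserving_symm_measurableEquiv_toLp (Fin N)).symm
  set S : Set (EuclideanSpace ℝ (Fin N)) := {l | 1 < ‖l‖} with hS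
  have hkey :
      ∫⁻ x in e.symm ⁻¹' S, ENNReal.ofReal ((∑ j, |(e.symm x) j| ^ β j) ^ (-γ)) ∂volume =
        ∫⁻ l in S, ENNReal.ofReal ((∑ j, |l j| ^ β j) ^ (-γ)) ∂volume :=
    hvp.setLIntegral_comp_preimage_emb e.symm.measurableEmbedding
      (fun l => ENNReal.ofReal ((∑ j, |l j| ^ β j) ^ (-γ))) S
  rw [← hkey]
  -- coordinates of e.symm x agree with x
  have hesymm : ∀ (x : Fin N → ℝ) (j : Fin N), (e.symm x) j = x j := fun x j => rfl
  -- the rectangles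
  set c : ℕ → Fin N → ℝ := fun m j => (2 : ℝ) ^ ((m : ℝ) / β j) with hcdef
  have h2 : (0:ℝ) < 2 := two_pos
  have hc1 : ∀ m j, 1 ≤ c m j := fun m j =>
    Real.one_le_rpow one_le_two (div_nonneg (Nat.cast_nonneg m) (hβ j).le)
  have hcpos : ∀ m j, 0 < c m j := fun m j => lt_of_lt_of_le one_pos (hc1 m j)
  have hcmono : ∀ j, Monotone fun m => c m j := by
    intro j a b hab
    exact Real.rpow_le_rpow_of_exponent_le one_le_two
      ((div_le_div_iff_of_pos_right (hβ j)).2 (by exact_mod_cast hab))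
  set B : ℕ → Set (Fin N → ℝ) :=
    fun m => Set.univ.pi fun j => Set.Ico (c m j) (c (m + 1) j) with hBdef
  have hBmeas : ∀ m, MeasurableSet (B m) := fun m =>
    MeasurableSet.univ_pi fun j => measurableSet_Ico
  have hBdisj : Pairwise (Function.onFun Disjoint fun n => B (n + 1)) := by
    intro a b hab
    wlog hlt : a < b generalizing a b
    · exact (this hab.symm (by omega)).symm
    refine Set.disjoint_left.2 fun x hxa hxb => ?_
    have h1 := (hxa (0 : Fin N) (Set.mem_univ _)).2
    have h2 := (hxb (0 : Fin N) (Set.mem_univ _)).1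
    have : c (a + 2) (0 : Fin N) ≤ c (b + 1) (0 : Fin N) := hcmono _ (by omega)
    linarith
  -- B (m+1) lies in the region 1 < ‖·‖
  have hBsub : ∀ m, B (m + 1) ⊆ e.symm ⁻¹' S := by
    intro m x hx
    have hx0 := hx (0 : Fin N) (Set.mem_univ _)
    have h1x : (1:ℝ) < x 0 := by
      have hc' : (1:ℝ) < c (m + 1) (0 : Fin N) := by
        have : (1:ℝ) < (2:ℝ) ^ (((m:ℝ) + 1) / β 0) :=
          Real.one_lt_rpow one_lt_two (div_pos (by positivity) (hβ 0))
        simpa [hcdef, Nat.cast_add] using this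
      exact lt_of_lt_of_le hc' hx0.1
    have hn : |x 0| ≤ ‖e.symm x‖ := by
      rw [EuclideanSpace.norm_eq]
      have h1 : ‖(e.symm x) 0‖ ^ 2 ≤ ∑ i, ‖(e.symm x) i‖ ^ 2 :=
        Finset.single_le_sum (f := fun i => ‖(e.symm x) i‖ ^ 2)
          (fun i _ => sq_nonneg _) (Finset.mem_univ 0)
      calc |x 0| = Real.sqrt (‖(e.symm x) 0‖ ^ 2) := by
            rw [Real.sqrt_sq_eq_abs]
            simp [hesymm, Real.norm_eq_abs, abs_abs]
        _ ≤ _ := Real.sqrt_le_sqrt h1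
    exact lt_of_lt_of_le (lt_of_lt_of_le h1x (le_abs_self _)) hn
  -- lower bound via the disjoint union
  have hunion : (⋃ m, B (m + 1)) ⊆ e.symm ⁻¹' S := Set.iUnion_subset hBsub
  set f : (Fin N → ℝ) → ENNReal :=
    fun x => ENNReal.ofReal ((∑ j, |x j| ^ β j) ^ (-γ)) with hfdef
  have hfmeas : Measurable f := by
    rw [hfdef]
    fun_prop
  have hstep1 :
      ∑' m, ∫⁻ x in B (m + 1), f x ∂volume ≤
        ∫⁻ x in e.symm ⁻¹' S, f x ∂volume := by
    rw [← lintegral_iUnion (fun m => hBmeas (m + 1)) hBdisj]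
    exact lintegral_mono_set hunion
  -- per-term lower bound
  set P : ℝ := ∏ j, ((2:ℝ) ^ (1 / β j) - 1) with hPdef
  have hPpos : 0 < P := Finset.prod_pos fun j _ => by
    have : (1:ℝ) < (2:ℝ) ^ (1 / β j) :=
      Real.one_lt_rpow one_lt_two (div_pos one_pos (hβ j))
    linarith
  set C : ENNReal := ENNReal.ofReal ((2 * N) ^ (-γ) * P) with hCdef
  have hCpos : C ≠ 0 := by
    have hNpos : (0:ℝ) < N := by exact_mod_cast Nat.pos_of_ne_zero (by omega)
    have hpos : (0:ℝ) < (2 * N) ^ (-γ) * P :=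
      mul_pos (Real.rpow_pos_of_pos (by positivity) _) hPpos
    rw [hCdef, Ne, ENNReal.ofReal_eq_zero, not_le]
    exact hpos
  have hterm : ∀ m : ℕ, C ≤ ∫⁻ x in B (m + 1), f x ∂volume := by
    intro m
    set M : ℕ := m + 1 with hM
    -- pointwise lower bound on B M
    have hpt : ∀ x ∈ B M,
        ENNReal.ofReal (((N : ℝ) * (2:ℝ) ^ ((M:ℝ) + 1)) ^ (-γ)) ≤ f x := by
      intro x hx
      apply ENNReal.ofReal_le_ofReal
      have hxpos : ∀ j, 0 < x j := fun j =>
        lt_of_lt_of_le (hcpos M j) (hx j (Set.mem_univ j)).1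
      have hsum_pos : 0 < ∑ j, |x j| ^ β j := by
        apply Finset.sum_pos (fun j _ => Real.rpow_pos_of_pos (abs_pos.2 (hxpos j).ne') _)
        exact Finset.univ_nonempty
      have hub : ∑ j, |x j| ^ β j ≤ (N : ℝ) * (2:ℝ) ^ ((M:ℝ) + 1) := by
        have hj : ∀ j, |x j| ^ β j ≤ (2:ℝ) ^ ((M:ℝ) + 1) := by
          intro j
          have hxle : |x j| ≤ c (M + 1) j := by
            rw [abs_of_pos (hxpos j)]
            exact (hx j (Set.mem_univ j)).2.le
          calc |x j| ^ β j ≤ (c (M + 1) j) ^ β j :=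
                Real.rpow_le_rpow (abs_nonneg _) hxle (hβ j).le
            _ = (2:ℝ) ^ ((M:ℝ) + 1) := by
                simp only [hcdef]
                rw [← Real.rpow_mul (by norm_num : (0:ℝ) ≤ 2)]
                congr 1
                rw [div_mul_cancel₀ _ (hβ j).ne']
                push_cast
                ring
        calc ∑ j, |x j| ^ β j ≤ ∑ _j : Fin N, (2:ℝ) ^ ((M:ℝ) + 1) :=
              Finset.sum_le_sum fun j _ => hj j
          _ = (N : ℝ) * (2:ℝ) ^ ((M:ℝ) + 1) := by
              simp [Finset.sum_const, mul_comm]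
      exact Real.rpow_le_rpow_of_nonpos hsum_pos hub (neg_nonpos.2 hγ.le)
    have hvol : volume (B M) = ENNReal.ofReal (∏ j, (c (M + 1) j - c M j)) := by
      simp only [hBdef]
      rw [volume_pi_pi,
        ENNReal.ofReal_prod_of_nonneg (fun j _ => sub_nonneg.2 (hcmono j (Nat.le_succ M)))]
      exact Finset.prod_congr rfl fun j _ => Real.volume_Ico
    calc C ≤ ENNReal.ofReal (((N : ℝ) * (2:ℝ) ^ ((M:ℝ) + 1)) ^ (-γ)) * volume (B M) := by
          rw [hvol, ← ENNReal.ofReal_mul (by positivity)]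
          apply ENNReal.ofReal_le_ofReal
          -- real inequality
          have hprod : ∏ j, (c (M + 1) j - c M j) =
              (2:ℝ) ^ ((M : ℝ) * ∑ j, 1 / β j) * P := by
            rw [hPdef, Finset.mul_sum, Real.rpow_sum_of_pos h2,
              ← Finset.prod_mul_distrib]
            refine Finset.prod_congr rfl fun j _ => ?_
            simp only [hcdef]
            have : ((M + 1 : ℕ) : ℝ) / β j = (M : ℝ) / β j + 1 / β j := by
              push_cast; ring
            rw [this, Real.rpow_add h2]
            have : (M : ℝ) * (1 / β j) = (M : ℝ) / β j := by ring
            rw [this]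
            ring
          rw [hprod]
          have hsplit : ((N : ℝ) * (2:ℝ) ^ ((M:ℝ) + 1)) ^ (-γ) =
              (2 * (N:ℝ)) ^ (-γ) * ((2:ℝ) ^ (M:ℝ)) ^ (-γ) := by
            have hNpos : (0:ℝ) < N := by exact_mod_cast Nat.pos_of_ne_zero (by omega)
            rw [← Real.mul_rpow (by positivity) (by positivity)]
            congr 1
            rw [Real.rpow_add h2, Real.rpow_one]
            ring
          rw [hsplit]
          have h2m : ((2:ℝ) ^ (M:ℝ)) ^ (-γ) = (2:ℝ) ^ (-(M:ℝ) * γ) := by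
            rw [← Real.rpow_mul (by norm_num)]
            ring_nf
          rw [h2m, mul_assoc]
          have key : (1:ℝ) ≤ 2 ^ (-(M:ℝ) * γ) * 2 ^ ((M:ℝ) * ∑ j, 1 / β j) := by
            rw [← Real.rpow_add h2]
            have hexp : (0:ℝ) ≤ -(M:ℝ) * γ + (M:ℝ) * ∑ j, 1 / β j := by
              have hM0 : (0:ℝ) ≤ (M:ℝ) := Nat.cast_nonneg _
              nlinarith
            calc (1:ℝ) = (2:ℝ) ^ (0:ℝ) := by rw [Real.rpow_zero]
              _ ≤ _ := Real.rpow_le_rpow_of_exponent_le one_le_two hexp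
          have h1 : P ≤ 2 ^ (-(M:ℝ) * γ) * (2 ^ ((M:ℝ) * ∑ j, 1 / β j) * P) := by
            nth_rewrite 1 [← one_mul P]
            rw [← mul_assoc]
            exact mul_le_mul_of_nonneg_right key hPpos.le
          exact mul_le_mul_of_nonneg_left h1 (Real.rpow_nonneg (by positivity) _)
      _ ≤ ∫⁻ x in B M, f x ∂volume := by
          rw [← setLIntegral_const (B M) _]
          exact setLIntegral_mono hfmeas hpt
  have hsum : (⊤ : ENNReal) ≤ ∑' m : ℕ, ∫⁻ x in B (m + 1), f x ∂volume := by
    calc (⊤ : ENNReal) = ∑' _ : ℕ, C := (ENNReal.tsum_const_eq_top_of_ne_zero hCpos).symm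
      _ ≤ _ := ENNReal.tsum_le_tsum hterm
  exact top_le_iff.mp (le_trans hsum hstep1)
end

section
/- Let v(h) = 2∫_{R^N} (1 − cos⟨h, λ⟩) dF(λ) where F is a symmetric measure with ∫ |λ|²/(1+|λ|²) dF(λ) < ∞, and suppose ∫_{R^N} λ_j² dF(λ) < ∞ for a fixed j. Then the limit lim_{h,k→0} (v(h e_j) + v(k e_j) − v((h−k) e_j))/(h k) exists and equals 2 ∫_{R^N} λ_j² dF(λ). -/
open MeasureTheory Filter Topology

lemma one_sub_cos_abs_le (x : ℝ) : |1 - Real.cos x| ≤ |x| := by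
  have h1 : Real.cos x = 2 * Real.cos (x/2) ^ 2 - 1 := by
    have := Real.cos_two_mul (x/2)
    rw [show 2 * (x/2) = x by ring] at this
    linarith
  have h2 : Real.sin (x/2) ^ 2 + Real.cos (x/2) ^ 2 = 1 := Real.sin_sq_add_cos_sq _
  have h3 : 1 - Real.cos x = 2 * Real.sin (x/2) ^ 2 := by rw [h1]; linarith
  have h4 : |Real.sin (x/2)| ≤ |x/2| := Real.abs_sin_le_abs
  have h5 : |Real.sin (x/2)| ≤ 1 := Real.abs_sin_le_one _
  have h6 : Real.sin (x/2) ^ 2 ≤ |x/2| := by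
    calc Real.sin (x/2) ^ 2 = |Real.sin (x/2)| * |Real.sin (x/2)| := by
          rw [← abs_mul, sq, abs_mul_self]
      _ ≤ 1 * |x/2| := mul_le_mul h5 h4 (abs_nonneg _) zero_le_one
      _ = |x/2| := one_mul _
  rw [h3, abs_of_nonneg (by positivity)]
  rw [abs_div] at h6
  simp only [abs_two] at h6
  linarith [h6]

theorem stmt12 (N : ℕ) (F : Measure (Fin N → ℝ)) (j : Fin N)
    (hYaglom : ∫⁻ l, ENNReal.ofReal
        ((∑ i, (l i) ^ 2) / (1 + ∑ i, (l i) ^ 2)) ∂F ≠ ⊤)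
    (hsymm : F.map (fun l => -l) = F)
    (hj : ∫⁻ l, ENNReal.ofReal ((l j) ^ 2) ∂F ≠ ⊤)
    (v : (Fin N → ℝ) → ℝ)
    (hv : ∀ h, v h = 2 * ∫ l, (1 - Real.cos (∑ i, h i * l i)) ∂F) :
    Tendsto
      (fun p : ℝ × ℝ =>
        (v (p.1 • (Pi.single j 1 : Fin N → ℝ)) + v (p.2 • (Pi.single j 1 : Fin N → ℝ)) -
            v ((p.1 - p.2) • (Pi.single j 1 : Fin N → ℝ))) / (p.1 * p.2))
      ((𝓝[≠] (0:ℝ)) ×ˢ (𝓝[≠] (0:ℝ)))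
      (𝓝 (2 * ∫ l, (l j) ^ 2 ∂F)) := by
  -- the sum simplification
  have hsum : ∀ (t : ℝ) (l : Fin N → ℝ),
      (∑ i, (t • (Pi.single j 1 : Fin N → ℝ)) i * l i) = t * l j := by
    intro t l
    rw [Finset.sum_eq_single j]
    · simp
    · intro i _ hij
      simp [Pi.single_apply, hij]
    · simp
  -- integrability of l j ^ 2
  have hsqmeas : AEStronglyMeasurable (fun l : Fin N → ℝ => (l j) ^ 2) F :=
    ((continuous_apply j).pow 2).aestronglyMeasurable
  have hsq : Integrable (fun l : Fin N → ℝ => (l j) ^ 2) F := by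
    refine ⟨hsqmeas, ?_⟩
    rw [hasFiniteIntegral_iff_ofReal (Eventually.of_forall fun l => sq_nonneg _)]
    exact hj.lt_top
  -- integrability of 1 - cos (t * l j)
  have hint : ∀ t : ℝ, Integrable (fun l : Fin N → ℝ => 1 - Real.cos (t * l j)) F := by
    intro t
    refine Integrable.mono' (hsq.const_mul (t^2/2)) ?_ ?_
    · exact (continuous_const.sub
        (Real.continuous_cos.comp ((continuous_apply j).const_smul t))).aestronglyMeasurable
    · refine Eventually.of_forall fun l => ?_
      have h1 : Real.cos (t * l j) = 2 * Real.cos (t * l j / 2) ^ 2 - 1 := by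
        have := Real.cos_two_mul (t * l j / 2)
        rw [show 2 * (t * l j / 2) = t * l j by ring] at this
        linarith
      have h2 : Real.sin (t * l j / 2) ^ 2 + Real.cos (t * l j / 2) ^ 2 = 1 :=
        Real.sin_sq_add_cos_sq _
      have h4 : |Real.sin (t * l j / 2)| ≤ |t * l j / 2| := Real.abs_sin_le_abs
      have h6 : Real.sin (t * l j / 2) ^ 2 ≤ (t * l j / 2) ^ 2 := by
        rw [← sq_abs, ← sq_abs (t * l j / 2)]
        exact pow_le_pow_left₀ (abs_nonneg _) h4 2
      rw [Real.norm_eq_abs, abs_of_nonneg (by nlinarith [Real.cos_le_one (t * l j)])]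
      nlinarith
  -- rewrite v at single-multiples
  have hveq : ∀ t : ℝ, v (t • (Pi.single j 1 : Fin N → ℝ)) =
      2 * ∫ l, (1 - Real.cos (t * l j)) ∂F := by
    intro t
    rw [hv]
    congr 1
    refine integral_congr_ae (Eventually.of_forall fun l => ?_)
    simp only
    rw [hsum]
  -- rewrite the function as an integral
  have key : ∀ p : ℝ × ℝ,
      (v (p.1 • (Pi.single j 1 : Fin N → ℝ)) + v (p.2 • (Pi.single j 1 : Fin N → ℝ)) -
          v ((p.1 - p.2) • (Pi.single j 1 : Fin N → ℝ))) / (p.1 * p.2) =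
      ∫ l, (2 * ((1 - Real.cos (p.1 * l j)) * (1 - Real.cos (p.2 * l j)) +
          Real.sin (p.1 * l j) * Real.sin (p.2 * l j))) / (p.1 * p.2) ∂F := by
    intro p
    rw [hveq, hveq, hveq]
    rw [integral_div]
    congr 1
    have h1 := (hint p.1).const_mul 2
    have h2 := (hint p.2).const_mul 2
    have h3 := (hint (p.1 - p.2)).const_mul 2
    have e1 : ∫ l, (2 * (1 - Real.cos (p.1 * l j)) + 2 * (1 - Real.cos (p.2 * l j))
          - 2 * (1 - Real.cos ((p.1 - p.2) * l j))) ∂F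
        = 2 * (∫ l, (1 - Real.cos (p.1 * l j)) ∂F) + 2 * (∫ l, (1 - Real.cos (p.2 * l j)) ∂F)
          - 2 * (∫ l, (1 - Real.cos ((p.1 - p.2) * l j)) ∂F) := by
      have hadd : Integrable (fun l : Fin N → ℝ => 2 * (1 - Real.cos (p.1 * l j))
          + 2 * (1 - Real.cos (p.2 * l j))) F := h1.add h2
      rw [integral_sub hadd h3, integral_add h1 h2, integral_const_mul,
        integral_const_mul, integral_const_mul]
    rw [← e1]
    refine integral_congr_ae (Eventually.of_forall fun l => ?_)
    have hc : Real.cos ((p.1 - p.2) * l j) =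
        Real.cos (p.1 * l j) * Real.cos (p.2 * l j) +
        Real.sin (p.1 * l j) * Real.sin (p.2 * l j) := by
      rw [show (p.1 - p.2) * l j = p.1 * l j - p.2 * l j by ring, Real.cos_sub]
    simp only
    rw [hc]; ring
  rw [show (2 : ℝ) * ∫ l, (l j) ^ 2 ∂F = ∫ l, 2 * (l j) ^ 2 ∂F from (integral_const_mul _ _).symm]
  refine Tendsto.congr (fun p => (key p).symm) ?_
  refine tendsto_integral_filter_of_dominated_convergence (fun l => 4 * (l j) ^ 2)
    ?_ ?_ ?_ ?_
  · refine Eventually.of_forall fun p => ?_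
    refine Continuous.aestronglyMeasurable ?_
    fun_prop
  · have hne : ∀ᶠ p : ℝ × ℝ in (𝓝[≠] (0:ℝ)) ×ˢ (𝓝[≠] (0:ℝ)), p.1 ≠ 0 ∧ p.2 ≠ 0 := by
      filter_upwards [prod_mem_prod self_mem_nhdsWithin self_mem_nhdsWithin] with p hp
      exact ⟨hp.1, hp.2⟩
    filter_upwards [hne] with p hp
    refine Eventually.of_forall fun l => ?_
    obtain ⟨h1, h2⟩ := hp
    have hd : p.1 * p.2 ≠ 0 := mul_ne_zero h1 h2
    rw [norm_div, Real.norm_eq_abs, Real.norm_eq_abs, div_le_iff₀ (abs_pos.mpr hd)]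
    have b1 : |1 - Real.cos (p.1 * l j)| ≤ |p.1 * l j| := one_sub_cos_abs_le _
    have b2 : |1 - Real.cos (p.2 * l j)| ≤ |p.2 * l j| := one_sub_cos_abs_le _
    have b3 : |Real.sin (p.1 * l j)| ≤ |p.1 * l j| := Real.abs_sin_le_abs
    have b4 : |Real.sin (p.2 * l j)| ≤ |p.2 * l j| := Real.abs_sin_le_abs
    have bb : |(1 - Real.cos (p.1 * l j)) * (1 - Real.cos (p.2 * l j)) +
        Real.sin (p.1 * l j) * Real.sin (p.2 * l j)| ≤ 2 * (|p.1 * l j| * |p.2 * l j|) := by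
      calc _ ≤ |(1 - Real.cos (p.1 * l j)) * (1 - Real.cos (p.2 * l j))| +
            |Real.sin (p.1 * l j) * Real.sin (p.2 * l j)| := abs_add_le _ _
        _ ≤ |p.1 * l j| * |p.2 * l j| + |p.1 * l j| * |p.2 * l j| := by
            rw [abs_mul, abs_mul]
            exact add_le_add (mul_le_mul b1 b2 (abs_nonneg _) (abs_nonneg _))
              (mul_le_mul b3 b4 (abs_nonneg _) (abs_nonneg _))
        _ = 2 * (|p.1 * l j| * |p.2 * l j|) := by ring
    calc |2 * ((1 - Real.cos (p.1 * l j)) * (1 - Real.cos (p.2 * l j)) +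
          Real.sin (p.1 * l j) * Real.sin (p.2 * l j))|
        = 2 * |(1 - Real.cos (p.1 * l j)) * (1 - Real.cos (p.2 * l j)) +
          Real.sin (p.1 * l j) * Real.sin (p.2 * l j)| := by
          rw [abs_mul, abs_two]
      _ ≤ 2 * (2 * (|p.1 * l j| * |p.2 * l j|)) := by linarith
      _ = 4 * (l j) ^ 2 * |p.1 * p.2| := by
          rw [abs_mul, abs_mul, abs_mul]
          rw [show |p.1| * |l j| * (|p.2| * |l j|) = |l j| * |l j| * (|p.1| * |p.2|) by ring,
            abs_mul_abs_self]
          ring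
  · exact hsq.const_mul 4
  · refine Eventually.of_forall fun l => ?_
    have hlim1 : Tendsto (fun t : ℝ => Real.sin (t * l j) / t) (𝓝[≠] (0:ℝ)) (𝓝 (l j)) := by
      have hd : HasDerivAt (fun t : ℝ => Real.sin (t * l j)) (l j) 0 := by
        have := (Real.hasDerivAt_sin (0 * l j)).comp 0
          ((hasDerivAt_id (0:ℝ)).mul_const (l j))
        simpa [Function.comp_def] using this
      have := hasDerivAt_iff_tendsto_slope.mp hd
      refine this.congr' ?_
      filter_upwards [self_mem_nhdsWithin] with t ht
      simp [slope_def_field, div_eq_iff, ht]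
    have hlim2 : Tendsto (fun t : ℝ => (1 - Real.cos (t * l j)) / t) (𝓝[≠] (0:ℝ)) (𝓝 0) := by
      have hd : HasDerivAt (fun t : ℝ => 1 - Real.cos (t * l j)) 0 0 := by
        have := ((Real.hasDerivAt_cos (0 * l j)).comp 0
          ((hasDerivAt_id (0:ℝ)).mul_const (l j))).const_sub 1
        simpa using this
      have := hasDerivAt_iff_tendsto_slope.mp hd
      refine this.congr' ?_
      filter_upwards [self_mem_nhdsWithin] with t ht
      simp [slope_def_field, div_eq_iff, ht]
    have hT : Tendsto (fun p : ℝ × ℝ =>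
        2 * (((1 - Real.cos (p.1 * l j)) / p.1) * ((1 - Real.cos (p.2 * l j)) / p.2) +
          (Real.sin (p.1 * l j) / p.1) * (Real.sin (p.2 * l j) / p.2)))
        ((𝓝[≠] (0:ℝ)) ×ˢ (𝓝[≠] (0:ℝ))) (𝓝 (2 * (l j) ^ 2)) := by
      have := (((hlim2.comp tendsto_fst).mul (hlim2.comp tendsto_snd)).add
        ((hlim1.comp tendsto_fst).mul (hlim1.comp tendsto_snd))).const_mul (2:ℝ)
      simpa [sq] using this
    refine hT.congr' ?_
    filter_upwards [prod_mem_prod self_mem_nhdsWithin self_mem_nhdsWithin] with p hp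
    have h1 : (p.1 : ℝ) ≠ 0 := hp.1
    have h2 : (p.2 : ℝ) ≠ 0 := hp.2
    field_simp
end

section
/- Let γ > 0, β_j > 0 with γ > ∑_i 1/β_i, and H_j = (β_j/2)(γ − ∑_i 1/β_i). Then for each fixed j, the inequality β_j(γ − ∑_{i=1}^N 1/β_i) > 2 holds if and only if H_j > 1, and in that case ∫_{|λ|>1} λ_j² (∑_{i=1}^N |λ_i|^{β_i})^{-γ} dλ < ∞. -/
open MeasureTheory Real Set

lemma oneDimAux {k b c g : ℝ} (hk : 0 ≤ k) (hc : 0 < c) (hb : 0 < b)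
    (h : k + 1 < b * g) :
    Integrable (fun x : ℝ => |x| ^ k * (c + |x| ^ b) ^ (-g)) := by
  set p : ℝ := b * g - k with hp_def
  have hp : 1 < p := by simp [hp_def]; linarith
  have hg : 0 < g := by nlinarith
  have hmeas : Measurable fun x : ℝ => |x| ^ k * (c + |x| ^ b) ^ (-g) := by
    fun_prop
  refine Integrable.mono' (g := fun x =>
      (Icc (-1:ℝ) 1).indicator (fun _ => c ^ (-g)) x + 2 ^ p * (1 + |x|) ^ (-p)) ?_
      hmeas.aestronglyMeasurable ?_
  · refine ((integrableOn_const measure_Icc_lt_top.ne).integrable_indicator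
      measurableSet_Icc).add ?_
    have h1 : ((Module.finrank ℝ ℝ : ℝ)) < p := by
      simp [Module.finrank_self]; linarith
    have := (integrable_one_add_norm (E := ℝ) (μ := volume) h1).const_mul ((2:ℝ)^p)
    simpa [Real.norm_eq_abs] using this
  · filter_upwards with x
    have hfx : 0 ≤ |x| ^ k * (c + |x| ^ b) ^ (-g) := by positivity
    rw [Real.norm_of_nonneg hfx]
    rcases le_or_gt |x| 1 with h1 | h1
    · have hx1 := abs_le.mp h1
      rw [indicator_of_mem (by constructor <;> linarith)]
      have e1 : |x| ^ k ≤ 1 := Real.rpow_le_one (abs_nonneg x) h1 hk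
      have e2 : (c + |x| ^ b) ^ (-g) ≤ c ^ (-g) :=
        Real.rpow_le_rpow_of_nonpos hc (le_add_of_nonneg_right (by positivity))
          (by linarith)
      have e3 : (0:ℝ) ≤ 2 ^ p * (1 + |x|) ^ (-p) := by positivity
      have e4 : |x| ^ k * (c + |x| ^ b) ^ (-g) ≤ 1 * (c ^ (-g)) :=
        mul_le_mul e1 e2 (by positivity) (by norm_num)
      linarith
    · have hnotmem : x ∉ Icc (-1:ℝ) 1 := by
        rw [mem_Icc]; intro hmem; have := abs_le.mpr hmem; linarith
      rw [indicator_of_notMem hnotmem, zero_add]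
      have hx0 : (0:ℝ) < |x| := by linarith
      have s1 : (c + |x| ^ b) ^ (-g) ≤ (|x| ^ b) ^ (-g) :=
        Real.rpow_le_rpow_of_nonpos (by positivity) (le_add_of_nonneg_left hc.le)
          (by linarith)
      have s2 : (|x| ^ b) ^ (-g) = |x| ^ (-(b*g)) := by
        rw [← Real.rpow_mul (abs_nonneg x)]; ring_nf
      have s3 : |x| ^ k * |x| ^ (-(b*g)) = |x| ^ (-p) := by
        rw [← Real.rpow_add hx0, hp_def]; ring_nf
      have key : (1 + |x|) ^ p ≤ 2 ^ p * |x| ^ p := by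
        rw [← Real.mul_rpow (by norm_num) (abs_nonneg x)]
        exact Real.rpow_le_rpow (by positivity) (by linarith) (by linarith)
      have hfin : |x| ^ (-p) ≤ 2 ^ p * (1 + |x|) ^ (-p) := by
        have A : (0:ℝ) < |x| ^ p := by positivity
        have B : (0:ℝ) < (1 + |x|) ^ p := by positivity
        rw [Real.rpow_neg (abs_nonneg x), Real.rpow_neg (by positivity : (0:ℝ) ≤ 1 + |x|),
          inv_eq_one_div, inv_eq_one_div, mul_one_div, div_le_div_iff₀ A B]
        nlinarith [key]
      calc |x| ^ k * (c + |x| ^ b) ^ (-g)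
          ≤ |x| ^ k * (|x| ^ b) ^ (-g) :=
            mul_le_mul_of_nonneg_left s1 (by positivity)
        _ = |x| ^ (-p) := by rw [s2, s3]
        _ ≤ 2 ^ p * (1 + |x|) ^ (-p) := hfin


theorem stmt14 (N : ℕ) (hN : 1 ≤ N) (γ : ℝ) (hγ : 0 < γ) (β : Fin N → ℝ)
    (hβ : ∀ i, 0 < β i) (hsum : ∑ i, 1 / β i < γ)
    (H : Fin N → ℝ) (hH : ∀ i, H i = (β i / 2) * (γ - ∑ i', 1 / β i'))
    (j : Fin N) :
    (2 < β j * (γ - ∑ i, 1 / β i) ↔ 1 < H j) ∧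
    (2 < β j * (γ - ∑ i, 1 / β i) →
      ∫⁻ l in {l : EuclideanSpace ℝ (Fin N) | 1 < ‖l‖},
        ENNReal.ofReal ((l j) ^ 2 * (∑ i, |l i| ^ β i) ^ (-γ)) < ⊤) := by
  have hβj := hβ j
  constructor
  · rw [hH j]
    have e : β j / 2 * (γ - ∑ i', 1 / β i') = (β j * (γ - ∑ i', 1 / β i')) / 2 := by ring
    rw [e]
    constructor <;> intro h <;> linarith
  intro hcond
  have hNe : Nonempty (Fin N) := ⟨j⟩
  have hNpos : (0:ℝ) < N := by positivity
  set S : ℝ := ∑ i, 1 / β i with hSdef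
  set D : ℝ := γ - S with hDdef
  have hDpos : 0 < D := by simp only [hDdef]; linarith
  set δ : ℝ := (β j * D - 2) / (β j * N) with hδdef
  have hδpos : 0 < δ := div_pos (by linarith) (by positivity)
  set g : Fin N → ℝ := fun i => (if i = j then 3 else 1) / β i + δ with hgdef
  have hgpos : ∀ i, 0 < g i := by
    intro i; have := hβ i; simp only [hgdef]; split <;> positivity
  have hgsum : ∑ i, g i = γ := by
    have e1 : ∀ i, g i = 1 / β i + ((if i = j then 2 / β j else 0) + δ) := by
      intro i; simp only [hgdef]; split
      · rename_i hh; rw [hh]; ring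
      · ring
    rw [Finset.sum_congr rfl (fun i _ => e1 i), Finset.sum_add_distrib,
      Finset.sum_add_distrib, Finset.sum_ite_eq' Finset.univ j (fun _ => 2 / β j),
      Finset.sum_const, Finset.card_univ, Fintype.card_fin]
    have hNδ : (N : ℝ) * δ = D - 2 / β j := by
      rw [hδdef]; field_simp
    simp only [Finset.mem_univ, if_true, nsmul_eq_mul, ← hSdef]
    rw [hNδ]; simp only [hDdef]; ring
  -- constants
  set b : ℝ := Finset.univ.sup' Finset.univ_nonempty β with hbdef
  set r : ℝ := (N : ℝ) ^ (-(1/2) : ℝ) with hrdef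
  have hr0 : 0 < r := by positivity
  have hr1 : r ≤ 1 :=
    Real.rpow_le_one_of_one_le_of_nonpos (by exact_mod_cast hN) (by norm_num)
  set c : ℝ := r ^ b with hcdef
  have hc0 : 0 < c := by positivity
  -- the one-dimensional factors
  set h : Fin N → ℝ → ℝ :=
    fun i x => (if i = j then |x| ^ (2:ℝ) else 1) * (c + |x| ^ (β i)) ^ (-(g i)) with hhdef
  have hβg : ∀ i, β i * g i = (if i = j then 3 else 1) + β i * δ := by
    intro i; have := (hβ i).ne'; simp only [hgdef]; field_simp
  have hInt : ∀ i, Integrable (h i) := by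
    intro i
    by_cases hij : i = j
    · simp only [hhdef, if_pos hij]
      exact oneDimAux (by norm_num) hc0 (hβ i)
        (by rw [hβg i, if_pos hij]; nlinarith [hβ i, hδpos])
    · simp only [hhdef, if_neg hij]
      have := oneDimAux (k := 0) le_rfl hc0 (hβ i)
        (by rw [hβg i, if_neg hij]; nlinarith [hβ i, hδpos])
      simpa using this
  have hmeas_h : ∀ i, Measurable (h i) := by
    intro i
    by_cases hij : i = j
    · simp only [hhdef, if_pos hij]; fun_prop
    · simp only [hhdef, if_neg hij]; fun_prop
  -- product integrability
  have hProd : Integrable (fun y : Fin N → ℝ => ∏ i, h i (y i)) :=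
    Integrable.fintype_prod (𝕜 := ℝ) hInt
  have hBig : Integrable (fun y : Fin N → ℝ => 2 ^ γ * ∏ i, h i (y i)) :=
    hProd.const_mul _
  have hLint : ∫⁻ y : Fin N → ℝ, ENNReal.ofReal (2 ^ γ * ∏ i, h i (y i)) < ⊤ :=
    hBig.lintegral_lt_top
  have hGmeas : Measurable fun y : Fin N → ℝ =>
      ENNReal.ofReal (2 ^ γ * ∏ i, h i (y i)) := by
    apply Measurable.ennreal_ofReal
    exact measurable_const.mul
      (Finset.measurable_prod Finset.univ fun i _ => (hmeas_h i).comp (measurable_pi_apply i))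
  -- pointwise bound on the region
  have hbound : ∀ l : EuclideanSpace ℝ (Fin N), l ∈ {l : EuclideanSpace ℝ (Fin N) | 1 < ‖l‖} →
      ENNReal.ofReal ((l j) ^ 2 * (∑ i, |l i| ^ β i) ^ (-γ)) ≤
        ENNReal.ofReal (2 ^ γ * ∏ i, h i (l i)) := by
    intro l hl
    apply ENNReal.ofReal_le_ofReal
    simp only [Set.mem_setOf_eq] at hl
    set A : ℝ := ∑ i, |l i| ^ β i with hAdef
    have hA_ge : ∀ i, |l i| ^ β i ≤ A :=
      fun i => Finset.single_le_sum (f := fun i => |l i| ^ β i)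
        (fun i _ => by positivity) (Finset.mem_univ i)
    obtain ⟨m, hm⟩ : ∃ m, r ≤ |l m| := by
      by_contra hcon
      push_neg at hcon
      have hr2 : r ^ 2 = ((N:ℝ))⁻¹ := by
        rw [hrdef, ← Real.rpow_natCast _ 2, ← Real.rpow_mul (le_of_lt hNpos)]
        norm_num [Real.rpow_neg_one]
      have hsum2 : ∑ i, ‖l i‖ ^ 2 ≤ 1 := by
        have : ∀ i, ‖l i‖ ^ 2 ≤ r ^ 2 := by
          intro i
          have h1 : |l i| ≤ r := (hcon i).le
          rw [Real.norm_eq_abs]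
          exact pow_le_pow_left₀ (abs_nonneg _) h1 2
        calc ∑ i, ‖l i‖ ^ 2 ≤ ∑ _i : Fin N, r ^ 2 :=
              Finset.sum_le_sum fun i _ => this i
          _ = N * r ^ 2 := by rw [Finset.sum_const, Finset.card_univ,
              Fintype.card_fin, nsmul_eq_mul]
          _ = 1 := by rw [hr2]; field_simp
      have : ‖l‖ ≤ 1 := by
        rw [EuclideanSpace.norm_eq]
        calc Real.sqrt (∑ i, ‖l i‖ ^ 2) ≤ Real.sqrt 1 :=
              Real.sqrt_le_sqrt hsum2
          _ = 1 := Real.sqrt_one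
      linarith
    have hcA : c ≤ A := by
      have h1 : c ≤ r ^ (β m) := by
        rw [hcdef]
        exact Real.rpow_le_rpow_of_exponent_ge hr0 hr1
          (Finset.le_sup' β (Finset.mem_univ m))
      have h2 : r ^ (β m) ≤ |l m| ^ (β m) :=
        Real.rpow_le_rpow hr0.le hm (hβ m).le
      exact h1.trans (h2.trans (hA_ge m))
    have hA0 : 0 < A := lt_of_lt_of_le hc0 hcA
    have hdecomp : A ^ (-γ) = ∏ i, A ^ (-(g i)) := by
      have e : (-γ) = ∑ i, -(g i) := by
        rw [← hgsum]; exact (Finset.sum_neg_distrib _).symm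
      rw [e, Real.rpow_sum_of_pos hA0]
    have hterm : ∀ i, A ^ (-(g i)) ≤ 2 ^ (g i) * (c + |l i| ^ β i) ^ (-(g i)) := by
      intro i
      have hhalf : (c + |l i| ^ β i) / 2 ≤ A := by
        have := hA_ge i; linarith
      have hpos2 : 0 < (c + |l i| ^ β i) / 2 := by positivity
      have h1 : A ^ (-(g i)) ≤ ((c + |l i| ^ β i) / 2) ^ (-(g i)) :=
        Real.rpow_le_rpow_of_nonpos hpos2 hhalf (neg_nonpos.mpr (hgpos i).le)
      refine h1.trans (le_of_eq ?_)
      rw [Real.div_rpow (by positivity) (by norm_num : (0:ℝ) ≤ 2),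
        Real.rpow_neg (by norm_num : (0:ℝ) ≤ 2), div_inv_eq_mul, mul_comm]
    have hprodle : ∏ i, A ^ (-(g i)) ≤ ∏ i, (2 ^ (g i) * (c + |l i| ^ β i) ^ (-(g i))) :=
      Finset.prod_le_prod (fun i _ => by positivity) (fun i _ => hterm i)
    have hsplit : ∏ i, (2 ^ (g i) * (c + |l i| ^ β i) ^ (-(g i)))
        = 2 ^ γ * ∏ i, (c + |l i| ^ β i) ^ (-(g i)) := by
      rw [Finset.prod_mul_distrib, ← Real.rpow_sum_of_pos two_pos, hgsum]
    have hhprod : ∏ i, h i (l i) = |l j| ^ (2:ℝ) * ∏ i, (c + |l i| ^ β i) ^ (-(g i)) := by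
      simp only [hhdef]
      rw [Finset.prod_mul_distrib]
      congr 1
      rw [Finset.prod_ite_eq' Finset.univ j (fun i => |l i| ^ (2:ℝ))]
      simp
    have hlj : (l j) ^ 2 = |l j| ^ (2:ℝ) := by
      rw [← sq_abs, show ((2:ℝ)) = ((2:ℕ):ℝ) by norm_num, Real.rpow_natCast]
    calc (l j) ^ 2 * A ^ (-γ) = |l j| ^ (2:ℝ) * ∏ i, A ^ (-(g i)) := by
          rw [hlj, hdecomp]
      _ ≤ |l j| ^ (2:ℝ) * (2 ^ γ * ∏ i, (c + |l i| ^ β i) ^ (-(g i))) := by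
          apply mul_le_mul_of_nonneg_left (hprodle.trans hsplit.le) (by positivity)
      _ = 2 ^ γ * ∏ i, h i (l i) := by rw [hhprod]; ring
  -- assemble
  have hmp := EuclideanSpace.volume_preserving_symm_measurableEquiv_toLp (Fin N)
  have htrans : ∫⁻ l : EuclideanSpace ℝ (Fin N),
      ENNReal.ofReal (2 ^ γ * ∏ i, h i (l i))
      = ∫⁻ y : Fin N → ℝ, ENNReal.ofReal (2 ^ γ * ∏ i, h i (y i)) :=
    hmp.lintegral_comp hGmeas
  calc ∫⁻ l in {l : EuclideanSpace ℝ (Fin N) | 1 < ‖l‖},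
        ENNReal.ofReal ((l j) ^ 2 * (∑ i, |l i| ^ β i) ^ (-γ))
      ≤ ∫⁻ l in {l : EuclideanSpace ℝ (Fin N) | 1 < ‖l‖},
        ENNReal.ofReal (2 ^ γ * ∏ i, h i (l i)) := by
        refine setLIntegral_mono ?_ hbound
        exact hGmeas.comp (MeasurableEquiv.toLp 2 (Fin N → ℝ)).symm.measurable
    _ ≤ ∫⁻ l : EuclideanSpace ℝ (Fin N), ENNReal.ofReal (2 ^ γ * ∏ i, h i (l i)) :=
        setLIntegral_le_lintegral _ _
    _ = ∫⁻ y : Fin N → ℝ, ENNReal.ofReal (2 ^ γ * ∏ i, h i (y i)) := htrans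
    _ < ⊤ := hLint
end

section
/- For every H > 1 there exist constants c > 0 such that for all h with 0 < |h| ≤ 1/2: ∫_{1}^{∞} (1 − cos(h x)) x² · x^{−(2H+1)} dx ≤ c (|h|^{2(H−1)} log(1/|h|) + |h|²). -/
open MeasureTheory

private lemma cos_bound (α u : ℝ) (hα0 : 0 ≤ α) (hα2 : α ≤ 2) :
    1 - Real.cos u ≤ 2 * |u| ^ α := by
  rcases le_or_gt |u| 1 with hu | hu
  · rcases eq_or_lt_of_le (abs_nonneg u) with h0 | h0
    · rw [← h0]
      have : u = 0 := abs_eq_zero.mp h0.symm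
      simp [this]
      positivity
    · have h1 : 1 - Real.cos u ≤ u ^ 2 / 2 := by
        have := Real.one_sub_sq_div_two_le_cos (x := u)
        linarith
      have h2 : u ^ 2 = |u| ^ (2 : ℝ) := by
        rw [show ((2:ℝ)) = ((2:ℕ):ℝ) by norm_num, Real.rpow_natCast, sq_abs]
      have h3 : |u| ^ (2 : ℝ) ≤ |u| ^ α :=
        Real.rpow_le_rpow_of_exponent_ge h0 hu hα2
      have h4 : 0 ≤ |u| ^ α := Real.rpow_nonneg (abs_nonneg u) α
      calc 1 - Real.cos u ≤ u ^ 2 / 2 := h1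
        _ = |u| ^ (2:ℝ) / 2 := by rw [h2]
        _ ≤ |u| ^ α / 2 := by linarith
        _ ≤ 2 * |u| ^ α := by linarith
  · have h1 : 1 - Real.cos u ≤ 2 := by
      have := Real.neg_one_le_cos u; linarith
    have h2 : (1 : ℝ) ≤ |u| ^ α := Real.one_le_rpow hu.le hα0
    linarith

private lemma key_int (H : ℝ) (hH : 1 < H) (h α : ℝ) (hα0 : 0 ≤ α) (hα2 : α ≤ 2)
    (hαH : α < 2 * H - 2) :
    ∫ x in Set.Ioi (1:ℝ), (1 - Real.cos (h * x)) * x ^ 2 * x ^ (-(2 * H + 1)) ≤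
      2 * |h| ^ α / (2 * H - 2 - α) := by
  set p : ℝ := α + 1 - 2 * H with hp_def
  have hp : p < -1 := by rw [hp_def]; linarith
  have hg_int : IntegrableOn (fun x : ℝ => 2 * |h| ^ α * x ^ p) (Set.Ioi 1) volume :=
    (integrableOn_Ioi_rpow_of_lt hp one_pos).const_mul _
  have hmono : ∫ x in Set.Ioi (1:ℝ), (1 - Real.cos (h * x)) * x ^ 2 * x ^ (-(2 * H + 1)) ≤
      ∫ x in Set.Ioi (1:ℝ), 2 * |h| ^ α * x ^ p := by
    apply integral_mono_of_nonneg
    · filter_upwards [ae_restrict_mem measurableSet_Ioi] with x hx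
      have hx1 : (1:ℝ) < x := hx
      have h1 : 0 ≤ 1 - Real.cos (h * x) := by have := Real.cos_le_one (h * x); linarith
      have h2 : (0:ℝ) ≤ x ^ (-(2 * H + 1)) := Real.rpow_nonneg (by linarith) _
      positivity
    · exact hg_int
    · filter_upwards [ae_restrict_mem measurableSet_Ioi] with x hx
      have hx1 : (1:ℝ) < x := hx
      have hx0 : (0:ℝ) < x := by linarith
      have hb : 1 - Real.cos (h * x) ≤ 2 * |h * x| ^ α := cos_bound α (h * x) hα0 hα2
      have habs : |h * x| ^ α = |h| ^ α * x ^ α := by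
        rw [abs_mul, Real.mul_rpow (abs_nonneg h) (abs_nonneg x), abs_of_pos hx0]
      have hxpow : x ^ α * (x ^ 2 * x ^ (-(2 * H + 1))) = x ^ p := by
        rw [show (x:ℝ) ^ 2 = x ^ (2:ℝ) by
              rw [show ((2:ℝ)) = ((2:ℕ):ℝ) by norm_num, Real.rpow_natCast],
          ← Real.rpow_add hx0, ← Real.rpow_add hx0]
        rw [hp_def]
        ring_nf
      have hnn : (0:ℝ) ≤ x ^ 2 * x ^ (-(2 * H + 1)) := by
        have := Real.rpow_nonneg hx0.le (-(2 * H + 1)); positivity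
      calc (1 - Real.cos (h * x)) * x ^ 2 * x ^ (-(2 * H + 1))
          = (1 - Real.cos (h * x)) * (x ^ 2 * x ^ (-(2 * H + 1))) := by ring
        _ ≤ 2 * |h * x| ^ α * (x ^ 2 * x ^ (-(2 * H + 1))) := by
            apply mul_le_mul_of_nonneg_right hb hnn
        _ = 2 * |h| ^ α * (x ^ α * (x ^ 2 * x ^ (-(2 * H + 1)))) := by rw [habs]; ring
        _ = 2 * |h| ^ α * x ^ p := by rw [hxpow]
  have hval : ∫ x in Set.Ioi (1:ℝ), 2 * |h| ^ α * x ^ p =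
      2 * |h| ^ α / (2 * H - 2 - α) := by
    rw [integral_const_mul, integral_Ioi_rpow_of_lt hp one_pos]
    rw [Real.one_rpow]
    have : p + 1 = -(2 * H - 2 - α) := by rw [hp_def]; ring
    rw [this]
    rw [neg_div_neg_eq, mul_one_div]
  linarith [hmono, hval.le, hval.ge]

theorem stmt19 (H : ℝ) (hH : 1 < H) :
    ∃ c : ℝ, 0 < c ∧ ∀ h : ℝ, 0 < |h| → |h| ≤ 1 / 2 →
      ∫ x in Set.Ioi (1:ℝ), (1 - Real.cos (h * x)) * x ^ 2 * x ^ (-(2 * H + 1)) ≤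
        c * (|h| ^ (2 * (H - 1)) * Real.log (1 / |h|) + |h| ^ 2) := by
  have hlog2 : 0 < Real.log 2 := Real.log_pos one_lt_two
  rcases le_or_gt H 2 with hH2 | hH2
  · -- case 1 < H ≤ 2
    set C₁ : ℝ := 1 / ((H - 1) * Real.log 2) + 1 with hC₁
    have hC₁pos : 0 < C₁ := by
      have h1 : 0 < (H - 1) * Real.log 2 := mul_pos (by linarith) hlog2
      have h2 : 0 < 1 / ((H - 1) * Real.log 2) := by positivity
      rw [hC₁]; linarith
    refine ⟨2 * Real.exp 1 * C₁, mul_pos (by positivity) hC₁pos, fun h hh hh2 => ?_⟩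
    set L : ℝ := Real.log (1 / |h|) with hLdef
    have hinv2 : (2:ℝ) ≤ 1 / |h| := by
      rw [le_div_iff₀ hh]; linarith
    have hL2 : Real.log 2 ≤ L := Real.log_le_log two_pos hinv2
    have hLpos : 0 < L := lt_of_lt_of_le hlog2 hL2
    set δ : ℝ := min (H - 1) (1 / L) with hδdef
    have hδpos : 0 < δ := lt_min (by linarith) (by positivity)
    set α : ℝ := 2 * H - 2 - δ with hαdef
    have hδH : δ ≤ H - 1 := min_le_left _ _
    have hδL : δ ≤ 1 / L := min_le_right _ _
    have hα0 : 0 ≤ α := by rw [hαdef]; linarith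
    have hα2 : α ≤ 2 := by rw [hαdef]; linarith
    have hαH : α < 2 * H - 2 := by rw [hαdef]; linarith
    have hI := key_int H hH h α hα0 hα2 hαH
    have hd : 2 * H - 2 - α = δ := by rw [hαdef]; ring
    rw [hd] at hI
    have hloghabs : Real.log |h| = -L := by
      rw [hLdef, one_div, Real.log_inv]; ring
    have hnegδ : |h| ^ (-δ) ≤ Real.exp 1 := by
      rw [Real.rpow_def_of_pos hh, hloghabs]
      apply Real.exp_le_exp.mpr
      have : δ * L ≤ (1 / L) * L := mul_le_mul_of_nonneg_right hδL hLpos.le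
      rw [one_div_mul_cancel hLpos.ne'] at this
      nlinarith
    have hsplit : |h| ^ (2 * (H - 1)) * |h| ^ (-δ) = |h| ^ α := by
      rw [← Real.rpow_add hh]; congr 1; rw [hαdef]; ring
    have hA : |h| ^ α ≤ Real.exp 1 * |h| ^ (2 * (H - 1)) := by
      rw [← hsplit, mul_comm]
      exact mul_le_mul_of_nonneg_right hnegδ (Real.rpow_nonneg (abs_nonneg h) _)
    have hH1 : (0:ℝ) < H - 1 := by linarith
    have hB : 1 / δ ≤ C₁ * L := by
      have h1 : 1 / δ ≤ 1 / (H - 1) + L := by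
        rcases min_cases (H - 1) (1 / L) with ⟨he, _⟩ | ⟨he, _⟩
        · rw [hδdef, he]; linarith
        · rw [hδdef, he, one_div_one_div]; have h3 : (0:ℝ) ≤ 1 / (H - 1) := by positivity
          linarith
      have h2 : 1 / (H - 1) ≤ 1 / ((H - 1) * Real.log 2) * L := by
        rw [div_mul_eq_mul_div, one_mul, div_le_div_iff₀ hH1 (by positivity)]
        nlinarith
      rw [hC₁, add_mul, one_mul]
      linarith
    calc ∫ x in Set.Ioi (1:ℝ), (1 - Real.cos (h * x)) * x ^ 2 * x ^ (-(2 * H + 1))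
        ≤ 2 * |h| ^ α / δ := hI
      _ = 2 * (|h| ^ α * (1 / δ)) := by ring
      _ ≤ 2 * ((Real.exp 1 * |h| ^ (2 * (H - 1))) * (C₁ * L)) := by
          apply mul_le_mul_of_nonneg_left _ (by norm_num : (0:ℝ) ≤ 2)
          exact mul_le_mul hA hB (by positivity) (by positivity)
      _ = (2 * Real.exp 1 * C₁) * (|h| ^ (2 * (H - 1)) * L) := by ring
      _ ≤ (2 * Real.exp 1 * C₁) * (|h| ^ (2 * (H - 1)) * L + |h| ^ 2) := by
          apply mul_le_mul_of_nonneg_left (le_add_of_nonneg_right (sq_nonneg _))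
          positivity
  · -- case H > 2
    have h4 : (0:ℝ) < 2 * H - 4 := by linarith
    refine ⟨2 / (2 * H - 4), by positivity, fun h hh hh2 => ?_⟩
    have hI := key_int H hH h 2 (by norm_num) (le_refl 2) (by linarith)
    rw [show 2 * H - 2 - (2:ℝ) = 2 * H - 4 by ring] at hI
    rw [show ((2:ℝ)) = ((2:ℕ):ℝ) by norm_num, Real.rpow_natCast] at hI
    have hlognn : 0 ≤ Real.log (1 / |h|) := by
      apply Real.log_nonneg
      rw [le_div_iff₀ hh]; linarith
    have ht1 : 0 ≤ |h| ^ (2 * (H - 1)) * Real.log (1 / |h|) :=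
      mul_nonneg (Real.rpow_nonneg (abs_nonneg h) _) hlognn
    calc ∫ x in Set.Ioi (1:ℝ), (1 - Real.cos (h * x)) * x ^ 2 * x ^ (-(2 * H + 1))
        ≤ 2 * |h| ^ 2 / (2 * H - 4) := hI
      _ = 2 / (2 * H - 4) * |h| ^ 2 := by ring
      _ ≤ 2 / (2 * H - 4) * (|h| ^ (2 * (H - 1)) * Real.log (1 / |h|) + |h| ^ 2) := by
          apply mul_le_mul_of_nonneg_left (by linarith) (by positivity)
end
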